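/- Let 0 < θ < π/2, let g be as below and let w = g ∗ g. Then ∫_{0}^{∞} e^{v} · w(v) dv = 2·tan²θ + 3 − 3θ·(tan θ + cot θ). -/

import Mathlib

open MeasureTheory

namespace Stmt11Aux

/-- antiderivative (in `x`) of `g(x) * g(u - x)` written with `c = cos θ`, `s = sin θ`. -/
noncomputable def A (c s u x : ℝ) : ℝ :=
  (x * Real.cos (u * (s / c)) / 2 + c / (4 * s) * Real.sin ((2 * x - u) * (s / c))
      - c ^ 2 / s * Real.sin (x * (s / c)) + c ^ 2 / s * Real.sin ((u - x) * (s / c))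
      + c ^ 2 * x) / c ^ 4

/-- `w(u) * c^4` in closed form. -/
noncomputable def PhiN (c s a u : ℝ) : ℝ :=
  Real.cos (u * (s / c)) * (a - u / 2 - c ^ 2)
    + Real.sin (u * (s / c)) * ((c ^ 2 + 1 / 2) * (c / s)) + (2 * a - u) * c ^ 2 - 2 * c ^ 2

/-- `PhiN` with an explicit Pythagoras correction term (equal to `PhiN` when `s² + c² = 1`). -/
noncomputable def PhiN2 (c s a u : ℝ) : ℝ :=
  PhiN c s a u + (s ^ 2 + c ^ 2 - 1) *
    (Real.cos (u * (s / c)) * (a - u / 2)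
      + Real.sin (u * (s / c)) * ((c ^ 2 + 1 / 2) * (c / s)))

/-- antiderivative of `exp u * PhiN2 u / c^4`. -/
noncomputable def Psi (c s a u : ℝ) : ℝ :=
  Real.exp u * (((-(c ^ 2) / 2) * u + c ^ 2 * (a - c ^ 2 - 1)) * Real.cos (u * (s / c))
      + ((-(c * s) / 2) * u + (c ^ 3 * (c ^ 2 + 1 / 2) / s + a * c * s)) * Real.sin (u * (s / c))
      + (-(c ^ 2)) * u + (2 * a * c ^ 2 - c ^ 2)) / c ^ 4

lemma hasDerivAt_A (c s u : ℝ) (hc : c ≠ 0) (hs : s ≠ 0) (x : ℝ) :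
    HasDerivAt (A c s u)
      (((Real.cos (x * (s / c)) - c) * (1 / c ^ 2)) *
        ((Real.cos ((u - x) * (s / c)) - c) * (1 / c ^ 2))) x := by
  have i2 : HasDerivAt (fun x : ℝ => (2 * x - u) * (s / c)) (2 * (s / c)) x := by
    simpa using (((hasDerivAt_id x).const_mul 2).sub_const u).mul_const (s / c)
  have i3 : HasDerivAt (fun x : ℝ => x * (s / c)) (s / c) x := by
    simpa using (hasDerivAt_id x).mul_const (s / c)
  have i4 : HasDerivAt (fun x : ℝ => (u - x) * (s / c)) (-(s / c)) x := by
    simpa using ((hasDerivAt_id x).const_sub u).mul_const (s / c)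
  have t1 : HasDerivAt (fun x : ℝ => x * Real.cos (u * (s / c)) / 2)
      (Real.cos (u * (s / c)) / 2) x := by
    simpa using ((hasDerivAt_id x).mul_const (Real.cos (u * (s / c)))).div_const 2
  have t2 : HasDerivAt (fun x : ℝ => c / (4 * s) * Real.sin ((2 * x - u) * (s / c)))
      (c / (4 * s) * (Real.cos ((2 * x - u) * (s / c)) * (2 * (s / c)))) x := by
    have := ((Real.hasDerivAt_sin ((2 * x - u) * (s / c))).comp x i2).const_mul (c / (4 * s))
    simpa [Function.comp] using this
  have t3 : HasDerivAt (fun x : ℝ => c ^ 2 / s * Real.sin (x * (s / c)))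
      (c ^ 2 / s * (Real.cos (x * (s / c)) * (s / c))) x := by
    have := ((Real.hasDerivAt_sin (x * (s / c))).comp x i3).const_mul (c ^ 2 / s)
    simpa [Function.comp] using this
  have t4 : HasDerivAt (fun x : ℝ => c ^ 2 / s * Real.sin ((u - x) * (s / c)))
      (c ^ 2 / s * (Real.cos ((u - x) * (s / c)) * (-(s / c)))) x := by
    have := ((Real.hasDerivAt_sin ((u - x) * (s / c))).comp x i4).const_mul (c ^ 2 / s)
    simpa [Function.comp] using this
  have t5 : HasDerivAt (fun x : ℝ => c ^ 2 * x) (c ^ 2) x := by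
    simpa using (hasDerivAt_id x).const_mul (c ^ 2)
  have H := ((((t1.add t2).sub t3).add t4).add t5).div_const (c ^ 4)
  refine H.congr_deriv ?_
  have e1 : u * (s / c) = x * (s / c) + (u - x) * (s / c) := by ring
  have e2 : (2 * x - u) * (s / c) = x * (s / c) - (u - x) * (s / c) := by ring
  rw [e1, e2, Real.cos_add, Real.cos_sub]
  field_simp
  ring

lemma A_eval (c s a u θ : ℝ) (hc : c ≠ 0) (hs : s ≠ 0) (hat : a * (s / c) = θ)
    (hsv : Real.sin θ = s) (hcv : Real.cos θ = c) :
    A c s u a - A c s u (u - a) = PhiN c s a u / c ^ 4 := by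
  have ea1 : (2 * a - u) * (s / c) = 2 * θ - u * (s / c) := by rw [← hat]; ring
  have ea3 : (u - a) * (s / c) = u * (s / c) - θ := by rw [← hat]; ring
  have ea4 : (2 * (u - a) - u) * (s / c) = u * (s / c) - 2 * θ := by rw [← hat]; ring
  have ea5 : (u - (u - a)) * (s / c) = θ := by rw [← hat]; ring
  simp only [A, PhiN]
  rw [ea1, ea4, ea3, ea5, hat]
  simp only [Real.sin_sub, Real.sin_two_mul, Real.cos_two_mul, hsv, hcv]
  field_simp
  ring

lemma hasDerivAt_Psi (c s a : ℝ) (hc : c ≠ 0) (hs : s ≠ 0) (u : ℝ) :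
    HasDerivAt (Psi c s a) (Real.exp u * (PhiN2 c s a u / c ^ 4)) u := by
  have i3 : HasDerivAt (fun u : ℝ => u * (s / c)) (s / c) u := by
    simpa using (hasDerivAt_id u).mul_const (s / c)
  have hcos : HasDerivAt (fun u : ℝ => Real.cos (u * (s / c)))
      (-Real.sin (u * (s / c)) * (s / c)) u := by
    have := (Real.hasDerivAt_cos (u * (s / c))).comp u i3
    exact this
  have hsin : HasDerivAt (fun u : ℝ => Real.sin (u * (s / c)))
      (Real.cos (u * (s / c)) * (s / c)) u := by
    have := (Real.hasDerivAt_sin (u * (s / c))).comp u i3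
    exact this
  have hP : HasDerivAt (fun u : ℝ => (-(c ^ 2) / 2) * u + c ^ 2 * (a - c ^ 2 - 1))
      (-(c ^ 2) / 2) u := by
    simpa using ((hasDerivAt_id u).const_mul (-(c ^ 2) / 2)).add_const (c ^ 2 * (a - c ^ 2 - 1))
  have hQ : HasDerivAt
      (fun u : ℝ => (-(c * s) / 2) * u + (c ^ 3 * (c ^ 2 + 1 / 2) / s + a * c * s))
      (-(c * s) / 2) u := by
    simpa using ((hasDerivAt_id u).const_mul (-(c * s) / 2)).add_const
      (c ^ 3 * (c ^ 2 + 1 / 2) / s + a * c * s)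
  have hL : HasDerivAt (fun u : ℝ => (-(c ^ 2)) * u) (-(c ^ 2)) u := by
    simpa using (hasDerivAt_id u).const_mul (-(c ^ 2))
  have hbody := (((hP.mul hcos).add (hQ.mul hsin)).add hL).add_const (2 * a * c ^ 2 - c ^ 2)
  have H := ((Real.hasDerivAt_exp u).mul hbody).div_const (c ^ 4)
  refine H.congr_deriv ?_
  simp only [PhiN2, PhiN, Pi.add_apply, Pi.mul_apply]
  field_simp
  ring

lemma final_eval (c s θ : ℝ) (hc : c ≠ 0) (hs : s ≠ 0) (hpy : s ^ 2 + c ^ 2 = 1)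
    (hsv : Real.sin θ = s) (hcv : Real.cos θ = c) :
    Psi c s (θ * (c / s)) (2 * (θ * (c / s))) - Psi c s (θ * (c / s)) 0
      = 2 * (s / c) ^ 2 + 3 - 3 * θ * (s / c + c / s) := by
  have e1 : 2 * (θ * (c / s)) * (s / c) = 2 * θ := by field_simp
  have h2 : Psi c s (θ * (c / s)) (2 * (θ * (c / s))) - Psi c s (θ * (c / s)) 0
      = (2 * (s / c) ^ 2 + 3 - 3 * θ * (s / c + c / s))
        + (s ^ 2 + c ^ 2 - 1) * ((3 * θ * c - 2 * s) / (c ^ 2 * s)) := by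
    simp only [Psi]
    rw [e1, Real.cos_two_mul, Real.sin_two_mul, hsv, hcv]
    simp only [zero_mul, Real.cos_zero, Real.sin_zero, Real.exp_zero, one_mul, mul_zero,
      mul_one, add_zero]
    field_simp
    ring
  rw [h2, show s ^ 2 + c ^ 2 - 1 = 0 by linarith, zero_mul, add_zero]

end Stmt11Aux

/-- For `0 < θ < π/2`, with `g` the truncated-cosine mollifier and
`w = g ∗ g` its convolution square, `∫_0^∞ e^v w(v) dv = 2 tan²θ + 3 − 3θ(tan θ + cot θ)`. -/
theorem stmt_11 (θ : ℝ) (hθ₁ : 0 < θ) (hθ₂ : θ < Real.pi / 2)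
    (g w : ℝ → ℝ)
    (hg : ∀ u : ℝ, g u =
      if |u| < θ * Real.cot θ then
        (Real.cos (u * Real.tan θ) - Real.cos θ) * (1 / Real.cos θ ^ 2)
      else 0)
    (hw : ∀ u : ℝ, w u = ∫ v : ℝ, g v * g (u - v)) :
    ∫ v in Set.Ioi (0 : ℝ), Real.exp v * w v =
      2 * Real.tan θ ^ 2 + 3 - 3 * θ * (Real.tan θ + Real.cot θ) := by
  obtain ⟨c, hcv⟩ : ∃ c, Real.cos θ = c := ⟨_, rfl⟩
  obtain ⟨s, hsv⟩ : ∃ s, Real.sin θ = s := ⟨_, rfl⟩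
  have hcpos : 0 < c := by
    rw [← hcv]; exact Real.cos_pos_of_mem_Ioo ⟨by linarith [Real.pi_pos], hθ₂⟩
  have hspos : 0 < s := by
    rw [← hsv]; exact Real.sin_pos_of_pos_of_lt_pi hθ₁ (by linarith [Real.pi_pos])
  have hc0 : c ≠ 0 := ne_of_gt hcpos
  have hs0 : s ≠ 0 := ne_of_gt hspos
  have htan : Real.tan θ = s / c := by rw [Real.tan_eq_sin_div_cos, hcv, hsv]
  have hcot : Real.cot θ = c / s := by rw [Real.cot_eq_cos_div_sin, hcv, hsv]
  have hpy : s ^ 2 + c ^ 2 = 1 := by rw [← hcv, ← hsv]; exact Real.sin_sq_add_cos_sq θ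
  set a := θ * (c / s) with hadef
  have ha0 : 0 < a := mul_pos hθ₁ (div_pos hcpos hspos)
  have hat : a * (s / c) = θ := by rw [hadef]; field_simp
  have hg' : ∀ u, g u = if |u| < a then (Real.cos (u * (s / c)) - c) * (1 / c ^ 2) else 0 := by
    intro u
    rw [hg u, htan, hcot, hcv, ← hadef]
  -- w vanishes beyond 2a
  have key2 : ∀ v : ℝ, 2 * a ≤ v → w v = 0 := by
    intro v hv
    rw [hw v]
    have hz : (fun x => g x * g (v - x)) = fun _ => (0 : ℝ) := by
      funext x
      rw [hg' x, hg' (v - x)]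
      split_ifs with h1 h2
      · exfalso
        have hx := lt_of_abs_lt h1
        have hy := lt_of_abs_lt h2
        linarith
      all_goals simp
    rw [hz, integral_zero]
  -- closed form of w on (0, 2a)
  have key1 : ∀ u ∈ Set.Ioo (0 : ℝ) (2 * a), w u = Stmt11Aux.PhiN c s a u / c ^ 4 := by
    rintro u ⟨hu0, hu2⟩
    rw [hw u]
    have hind : (fun v => g v * g (u - v)) = (Set.Ioo (u - a) a).indicator
        (fun v => ((Real.cos (v * (s / c)) - c) * (1 / c ^ 2)) *
          ((Real.cos ((u - v) * (s / c)) - c) * (1 / c ^ 2))) := by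
      funext v
      rw [hg' v, hg' (u - v)]
      by_cases hv : v ∈ Set.Ioo (u - a) a
      · rw [Set.indicator_of_mem hv]
        obtain ⟨h1, h2⟩ := hv
        rw [if_pos (abs_lt.mpr ⟨by linarith, h2⟩), if_pos (abs_lt.mpr ⟨by linarith, by linarith⟩)]
      · rw [Set.indicator_of_notMem hv]
        rw [Set.mem_Ioo, not_and_or, not_lt, not_lt] at hv
        rcases hv with h | h
        · have h2' : ¬ |u - v| < a := not_lt.mpr (le_trans (by linarith) (le_abs_self _))
          rw [if_neg h2', mul_zero]
        · have h1' : ¬ |v| < a := not_lt.mpr (le_trans h (le_abs_self v))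
          rw [if_neg h1', zero_mul]
    rw [hind, MeasureTheory.integral_indicator measurableSet_Ioo,
      ← MeasureTheory.integral_Ioc_eq_integral_Ioo,
      ← intervalIntegral.integral_of_le (by linarith : u - a ≤ a),
      intervalIntegral.integral_eq_sub_of_hasDerivAt
        (fun x _ => Stmt11Aux.hasDerivAt_A c s u hc0 hs0 x)
        (Continuous.intervalIntegrable (by fun_prop) _ _)]
    exact Stmt11Aux.A_eval c s a u θ hc0 hs0 hat hsv hcv
  have hP2 : ∀ v, Stmt11Aux.PhiN2 c s a v = Stmt11Aux.PhiN c s a v := by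
    intro v
    simp only [Stmt11Aux.PhiN2, show s ^ 2 + c ^ 2 - 1 = (0 : ℝ) by linarith, zero_mul, add_zero]
  -- restrict the integral to (0, 2a)
  have eq0 : ∀ v ∈ Set.Ioi (0 : ℝ), Real.exp v * w v
      = (Set.Ioo (0 : ℝ) (2 * a)).indicator (fun v => Real.exp v * w v) v := by
    intro v hv
    by_cases h : v < 2 * a
    · rw [Set.indicator_of_mem (Set.mem_Ioo.mpr ⟨Set.mem_Ioi.mp hv, h⟩)]
    · rw [Set.indicator_of_notMem (fun hmem => h hmem.2), key2 v (not_lt.mp h), mul_zero]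
  have step1 : (∫ v in Set.Ioi (0 : ℝ), Real.exp v * w v)
      = ∫ v in Set.Ioo (0 : ℝ) (2 * a), Real.exp v * w v := by
    rw [MeasureTheory.setIntegral_congr_fun measurableSet_Ioi eq0,
      MeasureTheory.setIntegral_indicator measurableSet_Ioo,
      Set.inter_eq_self_of_subset_right Set.Ioo_subset_Ioi_self]
  have step2 : (∫ v in Set.Ioo (0 : ℝ) (2 * a), Real.exp v * w v)
      = ∫ v in Set.Ioo (0 : ℝ) (2 * a), Real.exp v * (Stmt11Aux.PhiN2 c s a v / c ^ 4) :=
    MeasureTheory.setIntegral_congr_fun measurableSet_Ioo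
      (fun v hv => by rw [key1 v hv, hP2 v])
  have step3 : (∫ v in Set.Ioo (0 : ℝ) (2 * a), Real.exp v * (Stmt11Aux.PhiN2 c s a v / c ^ 4))
      = Stmt11Aux.Psi c s a (2 * a) - Stmt11Aux.Psi c s a 0 := by
    rw [← MeasureTheory.integral_Ioc_eq_integral_Ioo,
      ← intervalIntegral.integral_of_le (by linarith : (0 : ℝ) ≤ 2 * a)]
    exact intervalIntegral.integral_eq_sub_of_hasDerivAt
      (fun x _ => Stmt11Aux.hasDerivAt_Psi c s a hc0 hs0 x)
      (Continuous.intervalIntegrable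
        (by simp only [Stmt11Aux.PhiN2, Stmt11Aux.PhiN]; fun_prop) _ _)
  rw [step1, step2, step3, htan, hcot, hadef]
  exact Stmt11Aux.final_eval c s θ hc0 hs0 hpy hsv hcv
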